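/- No complex root of the polynomial f(X) = X^4 − 2X^3 − 2X^2 − 2X + 1 is a root of unity; that is, if z ∈ ℂ satisfies f(z) = 0, then z^n ≠ 1 for every integer n ≥ 1. -/

import Mathlib

open Polynomial

/-- If `x` is a root of the quartic with `|x| = 1`, then `x.re` satisfies `t^2 = t + 1`. -/
lemma quartic_aux_re (x : ℂ) (hf : x ^ 4 - 2 * x ^ 3 - 2 * x ^ 2 - 2 * x + 1 = 0)
    (hx : ‖x‖ = 1) : x.re ^ 2 = x.re + 1 := by
  have hx0 : x ≠ 0 := by
    intro h; rw [h] at hx; simp at hx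
  have hc : x * (starRingEnd ℂ) x = 1 := by
    rw [Complex.mul_conj, Complex.normSq_eq_norm_sq, hx]; norm_num
  have hsum : x + (starRingEnd ℂ) x = ((2 * x.re : ℝ) : ℂ) := by
    rw [Complex.add_conj]
  set c : ℂ := (starRingEnd ℂ) x with hcdef
  have key2 : x ^ 2 * ((x + c) ^ 2 - 2 * (x + c) - 4) = 0 := by
    linear_combination hf + (2 * x ^ 2 - 2 * x + 1 + x * c) * hc
  have key3 : (x + c) ^ 2 - 2 * (x + c) - 4 = 0 := by
    rcases mul_eq_zero.mp key2 with h | h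
    · exact absurd h (pow_ne_zero 2 hx0)
    · exact h
  rw [hsum] at key3
  have key4 : (2 * x.re : ℝ) ^ 2 - 2 * (2 * x.re) - 4 = 0 := by
    exact_mod_cast key3
  nlinarith [key4]

/-- Uniqueness of the real part: only one root of `t^2 = t + 1` lies in `[-1,1]`. -/
lemma quartic_aux_unique {a b : ℝ} (ha : a ^ 2 = a + 1) (hb : b ^ 2 = b + 1)
    (ha1 : |a| ≤ 1) (hb1 : |b| ≤ 1) : a = b := by
  rw [abs_le] at ha1 hb1
  have ha0 : a ≤ 0 := by nlinarith [ha1.2]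
  have hb0 : b ≤ 0 := by nlinarith [hb1.2]
  have hfac : (a - b) * (a + b - 1) = 0 := by linear_combination ha - hb
  rcases mul_eq_zero.mp hfac with h | h
  · linarith
  · linarith

/-- No rational number squares to 5. -/
lemma quartic_aux_not_sq (t : ℚ) (h : t ^ 2 = 5) : False := by
  have h5 : IsSquare ((5 : ℕ) : ℚ) := ⟨t, by push_cast; linear_combination -h⟩
  rw [Rat.isSquare_natCast_iff] at h5
  obtain ⟨r, hr⟩ := h5
  have hr5 : r ≤ 5 := by nlinarith
  interval_cases r <;> omega

/-- No complex root of `f(X) = X^4 - 2X^3 - 2X^2 - 2X + 1` is a root of unity. -/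
theorem quartic_roots_not_roots_of_unity :
    ∀ z : ℂ, z ^ 4 - 2 * z ^ 3 - 2 * z ^ 2 - 2 * z + 1 = 0 →
      ∀ n : ℕ, 1 ≤ n → z ^ n ≠ 1 := by
  intro z hz n hn hzn
  have hn0 : n ≠ 0 := by omega
  -- |z| = 1
  have habs : ‖z‖ = 1 := by
    have h1 : (‖z‖) ^ n = 1 := by rw [← norm_pow, hzn, norm_one]
    rcases lt_trichotomy (‖z‖) 1 with h | h | h
    · have := pow_lt_one₀ (norm_nonneg z) h hn0
      rw [h1] at this; exact absurd this (lt_irrefl 1)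
    · exact h
    · have := one_lt_pow₀ h hn0
      rw [h1] at this; exact absurd this (lt_irrefl 1)
  have hre : z.re ^ 2 = z.re + 1 := quartic_aux_re z hz habs
  have hsq : z.re ^ 2 + z.im ^ 2 = 1 := by
    have := Complex.sq_norm z
    rw [habs] at this
    simpa [Complex.normSq_apply, sq] using this.symm
  have him : z.im ≠ 0 := by
    intro h
    rw [h] at hsq
    nlinarith
  -- z is integral over ℚ
  have hint : IsIntegral ℚ z := by
    refine ⟨X ^ n - C 1, monic_X_pow_sub_C 1 hn0, ?_⟩
    simp [hzn]
  set g : ℚ[X] := minpoly ℚ z with hg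
  have hgmonic : g.Monic := minpoly.monic hint
  have hF : (Polynomial.aeval z) (X ^ 4 - 2 * X ^ 3 - 2 * X ^ 2 - 2 * X + 1 : ℚ[X]) = 0 := by
    simp only [map_add, map_sub, map_mul, map_pow, aeval_X, map_ofNat, map_one]
    convert hz using 2
  have hgf : g ∣ (X ^ 4 - 2 * X ^ 3 - 2 * X ^ 2 - 2 * X + 1 : ℚ[X]) := minpoly.dvd ℚ z hF
  have hgn : g ∣ (X ^ n - 1 : ℚ[X]) := minpoly.dvd ℚ z (by simp [hzn])
  set G : ℂ[X] := g.map (algebraMap ℚ ℂ) with hGdef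
  have hGmonic : G.Monic := hgmonic.map _
  have hGf : G ∣ ((X : ℂ[X]) ^ 4 - 2 * X ^ 3 - 2 * X ^ 2 - 2 * X + 1) := by
    have := Polynomial.map_dvd (algebraMap ℚ ℂ) hgf
    simpa using this
  have hGn : G ∣ ((X : ℂ[X]) ^ n - 1) := by
    have := Polynomial.map_dvd (algebraMap ℚ ℂ) hgn
    simpa using this
  -- every root of G is z or conj z
  have hroots : ∀ x ∈ G.roots, x = z ∨ x = (starRingEnd ℂ) z := by
    intro x hx
    have hxroot : G.IsRoot x := (Polynomial.mem_roots hGmonic.ne_zero).mp hx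
    have hxn : x ^ n = 1 := by
      have := hxroot.dvd hGn
      have h2 : Polynomial.eval x ((X : ℂ[X]) ^ n - 1) = 0 := this
      simpa [sub_eq_zero] using h2
    have hxf : x ^ 4 - 2 * x ^ 3 - 2 * x ^ 2 - 2 * x + 1 = 0 := by
      have := hxroot.dvd hGf
      have h2 : Polynomial.eval x ((X : ℂ[X]) ^ 4 - 2 * X ^ 3 - 2 * X ^ 2 - 2 * X + 1) = 0 := this
      simpa using h2
    have hxabs : ‖x‖ = 1 := by
      have h1 : (‖x‖) ^ n = 1 := by rw [← norm_pow, hxn, norm_one]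
      rcases lt_trichotomy (‖x‖) 1 with h | h | h
      · have := pow_lt_one₀ (norm_nonneg x) h hn0
        rw [h1] at this; exact absurd this (lt_irrefl 1)
      · exact h
      · have := one_lt_pow₀ h hn0
        rw [h1] at this; exact absurd this (lt_irrefl 1)
    have hxre : x.re ^ 2 = x.re + 1 := quartic_aux_re x hxf hxabs
    have hrex : x.re = z.re := by
      apply quartic_aux_unique hxre hre
      · calc |x.re| ≤ ‖x‖ := Complex.abs_re_le_norm x
          _ = 1 := hxabs
      · calc |z.re| ≤ ‖z‖ := Complex.abs_re_le_norm z
          _ = 1 := habs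
    have hxsq : x.re ^ 2 + x.im ^ 2 = 1 := by
      have := Complex.sq_norm x
      rw [hxabs] at this
      simpa [Complex.normSq_apply, sq] using this.symm
    have himsq : x.im ^ 2 = z.im ^ 2 := by
      rw [hrex] at hxsq; linarith
    have : (x.im - z.im) * (x.im + z.im) = 0 := by linear_combination himsq
    rcases mul_eq_zero.mp this with h | h
    · left; apply Complex.ext hrex; linarith
    · right; apply Complex.ext
      · rw [Complex.conj_re]; exact hrex
      · rw [Complex.conj_im]; linarith
  -- G has nodup roots, and card roots = natDegree g
  have hsep : G.Separable := ((minpoly.irreducible hint).separable).map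
  have hnodup : G.roots.Nodup := nodup_roots hsep
  have hsplits : Splits G := IsAlgClosed.splits G
  have hcard : g.natDegree = G.roots.card := (natDegree_map _).symm.trans hsplits.natDegree_eq_card_roots
  have hdle : g.natDegree ≤ 2 := by
    rw [hcard]
    have h1 : G.roots.toFinset ⊆ {z, (starRingEnd ℂ) z} := by
      intro x hx
      rcases hroots x (Multiset.mem_toFinset.mp hx) with h | h
      · simp [h]
      · simp [h]
    calc G.roots.card = G.roots.toFinset.card := (Multiset.toFinset_card_of_nodup hnodup).symm
      _ ≤ ({z, (starRingEnd ℂ) z} : Finset ℂ).card := Finset.card_le_card h1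
      _ ≤ 2 := Finset.card_insert_le _ _ |>.trans (by simp)
  have hdpos : 0 < g.natDegree := minpoly.natDegree_pos hint
  have haev := minpoly.aeval ℚ z
  rw [← hg] at haev
  -- exclude degree 1
  have hdne1 : g.natDegree ≠ 1 := by
    intro h1
    have := Polynomial.aeval_eq_sum_range (p := g) z
    rw [haev, h1] at this
    have hlc : g.coeff 1 = 1 := by
      have := hgmonic.coeff_natDegree
      rwa [h1] at this
    rw [Finset.sum_range_succ, Finset.sum_range_one, hlc] at this
    have hz1 : z = -((g.coeff 0 : ℚ) : ℂ) := by
      have h2 : ((g.coeff 0 : ℚ) : ℂ) + z = 0 := by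
        have := this.symm
        simpa [Rat.smul_def] using this
      linear_combination h2
    apply him
    rw [hz1]
    simp
  have hd2 : g.natDegree = 2 := by omega
  -- degree 2 case
  have heq := Polynomial.aeval_eq_sum_range (p := g) z
  rw [haev, hd2] at heq
  have hlc : g.coeff 2 = 1 := by
    have := hgmonic.coeff_natDegree
    rwa [hd2] at this
  rw [Finset.sum_range_succ, Finset.sum_range_succ, Finset.sum_range_one, hlc] at heq
  have heq1 : ((g.coeff 0 : ℚ) : ℂ) + ((g.coeff 1 : ℚ) : ℂ) * z + z ^ 2 = 0 := by
    have := heq.symm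
    simpa [Rat.smul_def] using this
  have heq2 : ((g.coeff 0 : ℚ) : ℂ) + ((g.coeff 1 : ℚ) : ℂ) * ((starRingEnd ℂ) z)
      + ((starRingEnd ℂ) z) ^ 2 = 0 := by
    have := congrArg (starRingEnd ℂ) heq1
    simpa [map_add, map_mul, map_pow] using this
  have hfac : (z - (starRingEnd ℂ) z) * (z + (starRingEnd ℂ) z + ((g.coeff 1 : ℚ) : ℂ)) = 0 := by
    linear_combination heq1 - heq2
  have hzne : z - (starRingEnd ℂ) z ≠ 0 := by
    intro h
    apply him
    have : (starRingEnd ℂ) z = z := by linear_combination -h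
    exact (Complex.conj_eq_iff_im.mp this)
  have hsum0 : z + (starRingEnd ℂ) z + ((g.coeff 1 : ℚ) : ℂ) = 0 := by
    rcases mul_eq_zero.mp hfac with h | h
    · exact absurd h hzne
    · exact h
  rw [Complex.add_conj] at hsum0
  have hreq : (2 * z.re : ℝ) = ((-(g.coeff 1) : ℚ) : ℝ) := by
    have : ((2 * z.re : ℝ) : ℂ) = ((-(g.coeff 1) : ℚ) : ℝ) := by
      push_cast at hsum0 ⊢
      linear_combination hsum0
    exact_mod_cast this
  -- z.re is rational, contradiction
  set q : ℚ := -(g.coeff 1) / 2 with hq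
  have hzq : z.re = (q : ℝ) := by
    rw [hq]; push_cast at hreq ⊢
    linarith
  have hq2 : (q : ℝ) ^ 2 = (q : ℝ) + 1 := by rw [← hzq]; exact hre
  have hq3 : q ^ 2 = q + 1 := by exact_mod_cast hq2
  exact quartic_aux_not_sq (2 * q - 1) (by linear_combination 4 * hq3)
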